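/- arXiv:math/0508426 — 2 statements merged into one kernel-verified Lean document; each statement's English description precedes it below -/
import Mathlib

section
/- Let T > 0 and for each n ≥ 1 let fₙ : [0,T] × [0,T]ⁿ × ℝⁿ → ℝ be continuous, bounded by Cₙ, and Lipschitz in the last n variables: |fₙ(t, s, x) − fₙ(t, s, ξ)| ≤ Lₙ Σᵢ|xᵢ − ξᵢ|. Assume the power series Σₙ Cₙ tⁿ/n! and Σₙ L_{n+1} tⁿ/n! have radius of convergence exceeding T. Then the equation y(t) = y₀(t) + Σ_{n≥1} (1/n!) ∫₀ᵗ⋯∫₀ᵗ fₙ(t, s₁,…,sₙ, y(s₁),…,y(sₙ)) ds₁⋯dsₙ, with y₀ continuous, has a unique continuous solution y on [0,T]. -/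
open MeasureTheory Set
open scoped Pointwise

namespace VolterraAux

noncomputable section

/-- The cube `[0,t]^m` as a subset of `Fin m → ℝ`. -/
def cube (m : ℕ) (t : ℝ) : Set (Fin m → ℝ) := Set.univ.pi fun _ => Icc 0 t

lemma measurableSet_cube (m : ℕ) (t : ℝ) : MeasurableSet (cube m t) :=
  MeasurableSet.univ_pi fun _ => measurableSet_Icc

lemma isCompact_cube (m : ℕ) (t : ℝ) : IsCompact (cube m t) :=
  isCompact_univ_pi fun _ => isCompact_Icc

lemma volume_cube_one (m : ℕ) : volume (cube m 1) = 1 := by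
  rw [cube, volume_pi_pi]
  simp [Real.volume_Icc]

lemma volume_cube_one_lt_top (m : ℕ) : volume (cube m 1) < ⊤ := by
  rw [volume_cube_one]; exact ENNReal.one_lt_top

lemma smul_cube {m : ℕ} {t : ℝ} (ht : 0 < t) : t • cube m 1 = cube m t := by
  rw [cube, cube, smul_pi₀ _ _ (ne_of_gt ht)]
  have h : (t • fun _ : Fin m => Icc (0:ℝ) 1) = fun _ : Fin m => Icc (0:ℝ) t := by
    funext j
    rw [Pi.smul_apply, LinearOrderedField.smul_Icc ht]
    simp
  rw [h]

/-- Scaling a multiple integral over `[0,t]^m` to the unit cube. -/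
lemma integral_cube_scale (m : ℕ) (g : (Fin m → ℝ) → ℝ) {t : ℝ} (ht : 0 < t) :
    ∫ s in cube m t, g s = t ^ m * ∫ w in cube m 1, g (t • w) := by
  rw [MeasureTheory.Measure.setIntegral_comp_smul_of_pos volume g (cube m 1) ht, smul_cube ht,
    Module.finrank_fin_fun (R := ℝ)]
  rw [smul_eq_mul, ← mul_assoc]
  rw [mul_inv_cancel₀ (by positivity), one_mul]

/-- Scaling, allowing `t = 0` when the dimension is positive. -/
lemma integral_cube_scale' (m : ℕ) (g : (Fin (m+1) → ℝ) → ℝ) {t : ℝ} (ht : 0 ≤ t) :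
    ∫ s in cube (m+1) t, g s = t ^ (m+1) * ∫ w in cube (m+1) 1, g (t • w) := by
  rcases eq_or_lt_of_le ht with h0 | hpos
  · have hz : volume (cube (m+1) (0:ℝ)) = 0 := by
      rw [cube, volume_pi_pi]
      simp [Real.volume_Icc]
    rw [← h0]
    rw [Measure.restrict_eq_zero.2 hz, integral_zero_measure]
    rw [zero_pow (Nat.succ_ne_zero m), zero_mul]
  · exact integral_cube_scale (m+1) g hpos

/-- Integral over the unit cube of a function of a single coordinate. -/
lemma integral_cube_coord (m : ℕ) (g : ℝ → ℝ) (i : Fin m) :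
    ∫ w in cube m 1, g (w i) = ∫ v in Icc (0:ℝ) 1, g v := by
  rw [← integral_indicator (measurableSet_cube m 1), ← integral_indicator measurableSet_Icc]
  have h1 : ((cube m 1).indicator (fun w => g (w i)) : (Fin m → ℝ) → ℝ)
      = fun w => ∏ j, (fun v => if j = i then (Icc (0:ℝ) 1).indicator g v
        else (Icc (0:ℝ) 1).indicator (fun _ => (1:ℝ)) v) (w j) := by
    funext w
    by_cases hw : w ∈ cube m 1
    · have hw' : ∀ j, w j ∈ Icc (0:ℝ) 1 := fun j => hw j (mem_univ j)
      rw [indicator_of_mem hw]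
      have : ∀ j, (if j = i then (Icc (0:ℝ) 1).indicator g (w j)
          else (Icc (0:ℝ) 1).indicator (fun _ => (1:ℝ)) (w j)) = if j = i then g (w i) else 1 := by
        intro j
        by_cases hj : j = i <;> simp [hj, indicator_of_mem (hw' _)]
      simp only [this]
      simp
    · rw [indicator_of_notMem hw]
      rw [cube, mem_univ_pi] at hw
      push_neg at hw
      obtain ⟨j, hj⟩ := hw
      refine (Finset.prod_eq_zero (Finset.mem_univ j) ?_).symm
      by_cases hji : j = i
      · subst hji
        simp only [if_pos rfl]
        exact indicator_of_notMem hj _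
      · simp only [if_neg hji]
        exact indicator_of_notMem hj _
  rw [h1, volume_pi, MeasureTheory.integral_fintype_prod_eq_prod
    (f := fun j v => if j = i then (Icc (0:ℝ) 1).indicator g v
      else (Icc (0:ℝ) 1).indicator (fun _ => (1:ℝ)) v)]
  have h2 : ∀ j, (∫ v : ℝ, if j = i then (Icc (0:ℝ) 1).indicator g v
      else (Icc (0:ℝ) 1).indicator (fun _ => (1:ℝ)) v)
      = if j = i then ∫ v : ℝ, (Icc (0:ℝ) 1).indicator g v else 1 := by
    intro j
    by_cases hj : j = i
    · simp [hj]
    · simp only [hj, if_false]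
      rw [integral_indicator_const (1:ℝ) measurableSet_Icc]
      simp [Real.volume_Icc]
  simp only [h2]
  simp

/-- The weighted kernel integral. -/
lemma t_mul_J {μ : ℝ} (hμ : 0 < μ) {t : ℝ} (ht : 0 ≤ t) :
    t * ∫ v in Icc (0:ℝ) 1, Real.exp (μ * (t * v)) = (Real.exp (μ * t) - 1) / μ := by
  rcases eq_or_lt_of_le ht with h0 | hpos
  · rw [← h0]
    simp
  · set c : ℝ := μ * t with hc
    have hc0 : 0 < c := mul_pos hμ hpos
    have harg : ∀ v : ℝ, μ * (t * v) = c * v := by intro v; rw [hc]; ring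
    have hderiv : ∀ v : ℝ, HasDerivAt (fun w : ℝ => Real.exp (c * w) / c) (Real.exp (c * v)) v := by
      intro v
      have h1 : HasDerivAt (fun w : ℝ => c * w) c v := by
        simpa using (hasDerivAt_id v).const_mul c
      have h2 := (Real.hasDerivAt_exp (c * v)).comp v h1
      have h3 := h2.div_const c
      convert h3 using 1
      · rfl
      · rfl
      · rfl
      · field_simp
    have hint : ∫ v in (0:ℝ)..1, Real.exp (c * v)
        = Real.exp (c * 1) / c - Real.exp (c * 0) / c := by
      refine intervalIntegral.integral_eq_sub_of_hasDerivAt (fun v _ => hderiv v) ?_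
      exact (Real.continuous_exp.comp (continuous_const.mul continuous_id)).intervalIntegrable 0 1
    have hset : ∫ v in Icc (0:ℝ) 1, Real.exp (μ * (t * v)) = ∫ v in (0:ℝ)..1, Real.exp (c * v) := by
      rw [intervalIntegral.integral_of_le (zero_le_one), ← integral_Icc_eq_integral_Ioc]
      exact setIntegral_congr_fun measurableSet_Icc fun v _ => by rw [harg]
    rw [hset, hint]
    simp only [mul_one, mul_zero, Real.exp_zero]
    rw [hc]
    field_simp

end

end VolterraAux

namespace VolterraAux

noncomputable section

variable {T : ℝ} {f : (n : ℕ) → ℝ → (Fin n → ℝ) → (Fin n → ℝ) → ℝ}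

/-- The `n`-th rescaled multiple-integral operator. -/
def Finteg (f : (n : ℕ) → ℝ → (Fin n → ℝ) → (Fin n → ℝ) → ℝ) (n : ℕ) (y : ℝ → ℝ) (t : ℝ) :
    ℝ :=
  ∫ w in cube (n+1) 1, f (n+1) t (t • w) fun i => y (t * w i)

lemma coord_mem {t : ℝ} (ht : t ∈ Icc 0 T) {m : ℕ} {w : Fin m → ℝ} (hw : w ∈ cube m 1)
    (i : Fin m) : t * w i ∈ Icc 0 T := by
  have h1 : w i ∈ Icc (0:ℝ) 1 := hw i (mem_univ i)
  constructor
  · exact mul_nonneg ht.1 h1.1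
  · calc t * w i ≤ t * 1 := mul_le_mul_of_nonneg_left h1.2 ht.1
      _ ≤ T := by rw [mul_one]; exact ht.2

lemma integrand_contOn
    (hfc : ∀ n : ℕ, ContinuousOn
      (fun p : ℝ × (Fin (n + 1) → ℝ) × (Fin (n + 1) → ℝ) => f (n + 1) p.1 p.2.1 p.2.2)
      ((Icc 0 T) ×ˢ ((Set.univ.pi fun _ => Icc (0 : ℝ) T) ×ˢ Set.univ)))
    (n : ℕ) {y : ℝ → ℝ} (hy : Continuous y) :
    ContinuousOn (fun p : ℝ × (Fin (n+1) → ℝ) => f (n+1) p.1 (p.1 • p.2) fun i => y (p.1 * p.2 i))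
      ((Icc 0 T) ×ˢ cube (n+1) 1) := by
  have hmap : MapsTo (fun p : ℝ × (Fin (n+1) → ℝ) => (p.1, (p.1 • p.2, fun i => y (p.1 * p.2 i))))
      ((Icc 0 T) ×ˢ cube (n+1) 1)
      ((Icc 0 T) ×ˢ ((Set.univ.pi fun _ => Icc (0 : ℝ) T) ×ˢ (Set.univ : Set (Fin (n+1) → ℝ)))) := by
    intro p hp
    rw [Set.mem_prod] at hp
    refine ⟨hp.1, ⟨?_, trivial⟩⟩
    rw [mem_univ_pi]
    intro i
    exact coord_mem hp.1 hp.2 i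
  have hcont : Continuous
      (fun p : ℝ × (Fin (n+1) → ℝ) => (p.1, (p.1 • p.2, fun i => y (p.1 * p.2 i)))) := by
    refine continuous_fst.prodMk (Continuous.prodMk ?_ ?_)
    · exact continuous_fst.smul continuous_snd
    · exact continuous_pi fun i => hy.comp (continuous_fst.mul ((continuous_apply i).comp continuous_snd))
  exact (hfc n).comp hcont.continuousOn hmap

lemma Finteg_integrand_contOn
    (hfc : ∀ n : ℕ, ContinuousOn
      (fun p : ℝ × (Fin (n + 1) → ℝ) × (Fin (n + 1) → ℝ) => f (n + 1) p.1 p.2.1 p.2.2)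
      ((Icc 0 T) ×ˢ ((Set.univ.pi fun _ => Icc (0 : ℝ) T) ×ˢ Set.univ)))
    (n : ℕ) {y : ℝ → ℝ} (hy : Continuous y) {t : ℝ} (ht : t ∈ Icc 0 T) :
    ContinuousOn (fun w : Fin (n+1) → ℝ => f (n+1) t (t • w) fun i => y (t * w i))
      (cube (n+1) 1) := by
  have h := (integrand_contOn hfc n hy).comp
    ((continuous_const.prodMk continuous_id).continuousOn
      (s := cube (n+1) 1) (f := fun w : Fin (n+1) → ℝ => (t, w)))
    (fun w hw => by rw [Set.mem_prod]; exact ⟨ht, hw⟩)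
  exact h

lemma Finteg_integrableOn
    (hfc : ∀ n : ℕ, ContinuousOn
      (fun p : ℝ × (Fin (n + 1) → ℝ) × (Fin (n + 1) → ℝ) => f (n + 1) p.1 p.2.1 p.2.2)
      ((Icc 0 T) ×ˢ ((Set.univ.pi fun _ => Icc (0 : ℝ) T) ×ˢ Set.univ)))
    (n : ℕ) {y : ℝ → ℝ} (hy : Continuous y) {t : ℝ} (ht : t ∈ Icc 0 T) :
    IntegrableOn (fun w : Fin (n+1) → ℝ => f (n+1) t (t • w) fun i => y (t * w i))
      (cube (n+1) 1) volume :=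
  ContinuousOn.integrableOn_compact (isCompact_cube _ _) (Finteg_integrand_contOn hfc n hy ht)

lemma Finteg_bd
    (hfc : ∀ n : ℕ, ContinuousOn
      (fun p : ℝ × (Fin (n + 1) → ℝ) × (Fin (n + 1) → ℝ) => f (n + 1) p.1 p.2.1 p.2.2)
      ((Icc 0 T) ×ˢ ((Set.univ.pi fun _ => Icc (0 : ℝ) T) ×ˢ Set.univ)))
    {C' : ℕ → ℝ}
    (hbd' : ∀ (n : ℕ) (t : ℝ) (s x : Fin (n + 1) → ℝ), t ∈ Icc 0 T →
      (∀ i, s i ∈ Icc 0 T) → |f (n + 1) t s x| ≤ C' (n + 1))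
    (n : ℕ) {y : ℝ → ℝ} (hy : Continuous y) {t : ℝ} (ht : t ∈ Icc 0 T) :
    |Finteg f n y t| ≤ C' (n + 1) := by
  have h := norm_setIntegral_le_of_norm_le_const (volume_cube_one_lt_top (n+1))
    (f := fun w : Fin (n+1) → ℝ => f (n+1) t (t • w) fun i => y (t * w i))
    (C := C' (n+1))
    (fun w hw => by
      rw [Real.norm_eq_abs]
      exact hbd' n t (t • w) _ ht (fun i => coord_mem ht hw i))
  rw [measureReal_def, volume_cube_one, ENNReal.toReal_one, mul_one, Real.norm_eq_abs] at h
  exact h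

lemma Finteg_contOn
    (hfc : ∀ n : ℕ, ContinuousOn
      (fun p : ℝ × (Fin (n + 1) → ℝ) × (Fin (n + 1) → ℝ) => f (n + 1) p.1 p.2.1 p.2.2)
      ((Icc 0 T) ×ˢ ((Set.univ.pi fun _ => Icc (0 : ℝ) T) ×ˢ Set.univ)))
    {C' : ℕ → ℝ}
    (hbd' : ∀ (n : ℕ) (t : ℝ) (s x : Fin (n + 1) → ℝ), t ∈ Icc 0 T →
      (∀ i, s i ∈ Icc 0 T) → |f (n + 1) t s x| ≤ C' (n + 1))
    (n : ℕ) {y : ℝ → ℝ} (hy : Continuous y) :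
    ContinuousOn (Finteg f n y) (Icc 0 T) := by
  apply MeasureTheory.continuousOn_of_dominated (bound := fun _ => C' (n+1))
  · intro t ht
    exact (Finteg_integrand_contOn hfc n hy ht).aestronglyMeasurable (measurableSet_cube _ _)
  · intro t ht
    rw [ae_restrict_iff' (measurableSet_cube _ _)]
    refine Filter.Eventually.of_forall fun w hw => ?_
    rw [Real.norm_eq_abs]
    exact hbd' n t (t • w) _ ht (fun i => coord_mem ht hw i)
  · exact integrableOn_const (volume_cube_one_lt_top (n+1)).ne
  · rw [ae_restrict_iff' (measurableSet_cube _ _)]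
    refine Filter.Eventually.of_forall fun w hw => ?_
    have h := (integrand_contOn hfc n hy).comp
      ((continuous_id.prodMk continuous_const).continuousOn
        (s := Icc 0 T) (f := fun t : ℝ => (t, w)))
      (fun t ht => by rw [Set.mem_prod]; exact ⟨ht, hw⟩)
    exact h

lemma Finteg_lip
    (hfc : ∀ n : ℕ, ContinuousOn
      (fun p : ℝ × (Fin (n + 1) → ℝ) × (Fin (n + 1) → ℝ) => f (n + 1) p.1 p.2.1 p.2.2)
      ((Icc 0 T) ×ˢ ((Set.univ.pi fun _ => Icc (0 : ℝ) T) ×ˢ Set.univ)))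
    {L' : ℕ → ℝ} (hL'0 : ∀ n, 0 ≤ L' n)
    (hlip' : ∀ (n : ℕ) (t : ℝ) (s x ξ : Fin (n + 1) → ℝ), t ∈ Icc 0 T →
      (∀ i, s i ∈ Icc 0 T) →
      |f (n + 1) t s x - f (n + 1) t s ξ| ≤ L' (n + 1) * ∑ i, |x i - ξ i|)
    (n : ℕ) {y z : ℝ → ℝ} (hy : Continuous y) (hz : Continuous z)
    {D ν : ℝ} (hD : 0 ≤ D) (hd : ∀ s : ℝ, |y s - z s| ≤ D * Real.exp (ν * s))
    {t : ℝ} (ht : t ∈ Icc 0 T) :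
    |Finteg f n y t - Finteg f n z t|
      ≤ L' (n+1) * ((n+1) * (D * ∫ v in Icc (0:ℝ) 1, Real.exp (ν * (t * v)))) := by
  have hi1 := Finteg_integrableOn hfc n hy ht
  have hi2 := Finteg_integrableOn hfc n hz ht
  rw [Finteg, Finteg, ← integral_sub hi1 hi2]
  have hRHScont : Continuous
      (fun w : Fin (n+1) → ℝ => L' (n+1) * ∑ i : Fin (n+1), D * Real.exp (ν * (t * w i))) := by
    refine continuous_const.mul (continuous_finset_sum _ fun i _ => ?_)
    exact continuous_const.mul
      (Real.continuous_exp.comp (continuous_const.mul (continuous_const.mul (continuous_apply i))))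
  have step1 : |∫ w in cube (n+1) 1,
      ((f (n+1) t (t • w) fun i => y (t * w i)) - f (n+1) t (t • w) fun i => z (t * w i))|
      ≤ ∫ w in cube (n+1) 1,
        |(f (n+1) t (t • w) fun i => y (t * w i)) - f (n+1) t (t • w) fun i => z (t * w i)| := by
    rw [← Real.norm_eq_abs]
    refine (norm_integral_le_integral_norm _).trans ?_
    simp only [Real.norm_eq_abs]
    exact le_refl _
  have step2 : ∫ w in cube (n+1) 1,
        |(f (n+1) t (t • w) fun i => y (t * w i)) - f (n+1) t (t • w) fun i => z (t * w i)|
      ≤ ∫ w in cube (n+1) 1, L' (n+1) * ∑ i : Fin (n+1), D * Real.exp (ν * (t * w i)) := by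
    refine setIntegral_mono_on ((hi1.sub hi2).abs) ?_ (measurableSet_cube _ _) ?_
    · exact (hRHScont.continuousOn).integrableOn_compact (isCompact_cube _ _)
    · intro w hw
      calc |(f (n+1) t (t • w) fun i => y (t * w i)) - f (n+1) t (t • w) fun i => z (t * w i)|
          ≤ L' (n+1) * ∑ i : Fin (n+1), |y (t * w i) - z (t * w i)| := by
            have h := hlip' n t (t • w) (fun i => y (t * w i)) (fun i => z (t * w i)) ht
              (fun i => coord_mem ht hw i)
            exact h
        _ ≤ L' (n+1) * ∑ i : Fin (n+1), D * Real.exp (ν * (t * w i)) := by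
            refine mul_le_mul_of_nonneg_left (Finset.sum_le_sum fun i _ => hd (t * w i)) (hL'0 _)
  have step3 : ∫ w in cube (n+1) 1, L' (n+1) * ∑ i : Fin (n+1), D * Real.exp (ν * (t * w i))
      = L' (n+1) * ((n+1) * (D * ∫ v in Icc (0:ℝ) 1, Real.exp (ν * (t * v)))) := by
    rw [integral_const_mul]
    congr 1
    have hint : ∀ i : Fin (n+1), IntegrableOn
        (fun w : Fin (n+1) → ℝ => D * Real.exp (ν * (t * w i))) (cube (n+1) 1) volume := by
      intro i
      exact ContinuousOn.integrableOn_compact (isCompact_cube _ _)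
        ((continuous_const.mul (Real.continuous_exp.comp
          (continuous_const.mul (continuous_const.mul (continuous_apply i))))).continuousOn)
    rw [integral_finset_sum Finset.univ (fun i _ => hint i)]
    have hcoord : ∀ i : Fin (n+1),
        ∫ w in cube (n+1) 1, D * Real.exp (ν * (t * w i))
          = D * ∫ v in Icc (0:ℝ) 1, Real.exp (ν * (t * v)) := by
      intro i
      rw [integral_const_mul]
      congr 1
      exact integral_cube_coord (n+1) (fun v => Real.exp (ν * (t * v))) i
    simp only [hcoord]
    rw [Finset.sum_const, Finset.card_univ, Fintype.card_fin, nsmul_eq_mul]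
    push_cast
    ring
  calc |∫ w in cube (n+1) 1,
      ((f (n+1) t (t • w) fun i => y (t * w i)) - f (n+1) t (t • w) fun i => z (t * w i))|
      ≤ ∫ w in cube (n+1) 1,
        |(f (n+1) t (t • w) fun i => y (t * w i)) - f (n+1) t (t • w) fun i => z (t * w i)| := step1
    _ ≤ ∫ w in cube (n+1) 1, L' (n+1) * ∑ i : Fin (n+1), D * Real.exp (ν * (t * w i)) := step2
    _ = L' (n+1) * ((n+1) * (D * ∫ v in Icc (0:ℝ) 1, Real.exp (ν * (t * v)))) := step3

end

end VolterraAux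

/-- `y` solves the multiple-integral Volterra series equation on `[0,T]`. -/
def IsVolterraSeriesSolution (T : ℝ)
    (f : (n : ℕ) → ℝ → (Fin n → ℝ) → (Fin n → ℝ) → ℝ)
    (y₀ y : ℝ → ℝ) : Prop :=
  ContinuousOn y (Icc 0 T) ∧
    ∀ t ∈ Icc 0 T,
      y t = y₀ t + ∑' n : ℕ, (1 / (Nat.factorial (n + 1)) : ℝ) *
        ∫ s in Set.univ.pi fun _ : Fin (n + 1) => Icc (0 : ℝ) t,
          f (n + 1) t s fun i => y (s i)

set_option maxHeartbeats 2000000 in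
open VolterraAux in
/-- Existence and uniqueness of a continuous solution of the Volterra equation
of the second kind with a series of multiple integrals, under continuity,
uniform bounds `Cₙ`, Lipschitz constants `Lₙ`, and radius-of-convergence
assumptions on the associated power series. -/
theorem volterra_series_existence_uniqueness (T : ℝ) (hT : 0 < T)
    (f : (n : ℕ) → ℝ → (Fin n → ℝ) → (Fin n → ℝ) → ℝ)
    (y₀ : ℝ → ℝ) (hy₀ : ContinuousOn y₀ (Icc 0 T))
    (C L : ℕ → ℝ)
    (hfc : ∀ n : ℕ, ContinuousOn
      (fun p : ℝ × (Fin (n + 1) → ℝ) × (Fin (n + 1) → ℝ) =>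
        f (n + 1) p.1 p.2.1 p.2.2)
      ((Icc 0 T) ×ˢ ((Set.univ.pi fun _ => Icc (0 : ℝ) T) ×ˢ Set.univ)))
    (hbd : ∀ (n : ℕ) (t : ℝ) (s x : Fin (n + 1) → ℝ), t ∈ Icc 0 T →
      (∀ i, s i ∈ Icc 0 T) → |f (n + 1) t s x| ≤ C (n + 1))
    (hlip : ∀ (n : ℕ) (t : ℝ) (s x ξ : Fin (n + 1) → ℝ), t ∈ Icc 0 T →
      (∀ i, s i ∈ Icc 0 T) →
      |f (n + 1) t s x - f (n + 1) t s ξ| ≤ L (n + 1) * ∑ i, |x i - ξ i|)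
    (hrad : ∃ R > T, Summable (fun n : ℕ => C n * R ^ n / Nat.factorial n) ∧
      Summable (fun n : ℕ => L (n + 1) * R ^ n / Nat.factorial n)) :
    (∃ y : ℝ → ℝ, IsVolterraSeriesSolution T f y₀ y) ∧
      ∀ y₁ y₂ : ℝ → ℝ, IsVolterraSeriesSolution T f y₀ y₁ →
        IsVolterraSeriesSolution T f y₀ y₂ → EqOn y₁ y₂ (Icc 0 T) := by
  classical
  obtain ⟨R, hTR, hCsum, hLsum⟩ := hrad
  have hT0 : (0:ℝ) ≤ T := hT.le
  have hTmem : T ∈ Icc (0:ℝ) T := ⟨hT0, le_refl T⟩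
  have hR0 : (0:ℝ) ≤ R := le_trans hT0 hTR.le
  set C' : ℕ → ℝ := fun n => max (C n) 0 with hC'def
  set L' : ℕ → ℝ := fun n => max (L n) 0 with hL'def
  have hC'0 : ∀ n, 0 ≤ C' n := fun n => le_max_right _ _
  have hL'0 : ∀ n, 0 ≤ L' n := fun n => le_max_right _ _
  have hbd' : ∀ (n : ℕ) (t : ℝ) (s x : Fin (n + 1) → ℝ), t ∈ Icc 0 T →
      (∀ i, s i ∈ Icc 0 T) → |f (n + 1) t s x| ≤ C' (n + 1) :=
    fun n t s x ht hs => (hbd n t s x ht hs).trans (le_max_left _ _)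
  have hlip' : ∀ (n : ℕ) (t : ℝ) (s x ξ : Fin (n + 1) → ℝ), t ∈ Icc 0 T →
      (∀ i, s i ∈ Icc 0 T) →
      |f (n + 1) t s x - f (n + 1) t s ξ| ≤ L' (n + 1) * ∑ i, |x i - ξ i| :=
    fun n t s x ξ ht hs => (hlip n t s x ξ ht hs).trans
      (mul_le_mul_of_nonneg_right (le_max_left _ _)
        (Finset.sum_nonneg fun i _ => abs_nonneg _))
  -- summability of the `C`-series at `T`
  have hCsum' : Summable (fun n : ℕ => C' (n+1) * T^(n+1) / (Nat.factorial (n+1) : ℝ)) := by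
    have h1 : Summable (fun n : ℕ => |C (n+1) * R^(n+1) / (Nat.factorial (n+1) : ℝ)|) :=
      (summable_nat_add_iff 1).2 hCsum.abs
    refine Summable.of_nonneg_of_le (fun n => by positivity) (fun n => ?_) h1
    have hre : |C (n+1) * R^(n+1) / (Nat.factorial (n+1) : ℝ)|
        = |C (n+1)| * R^(n+1) / (Nat.factorial (n+1) : ℝ) := by
      rw [abs_div, abs_mul, abs_pow, abs_of_nonneg hR0, Nat.abs_cast]
    rw [hre]
    have hnum : C' (n+1) * T^(n+1) ≤ |C (n+1)| * R^(n+1) :=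
      mul_le_mul (max_le (le_abs_self _) (abs_nonneg _))
        (pow_le_pow_left₀ hT0 hTR.le _) (by positivity) (abs_nonneg _)
    exact (div_le_div_iff_of_pos_right (by positivity)).2 hnum
  have hLt : ∀ t : ℝ, t ∈ Icc (0:ℝ) T →
      Summable (fun n : ℕ => L' (n+1) * t^n / (Nat.factorial n : ℝ)) := by
    intro t ht
    have h1 : Summable (fun n : ℕ => |L (n+1) * R^n / (Nat.factorial n : ℝ)|) := hLsum.abs
    refine Summable.of_nonneg_of_le (fun n => div_nonneg (mul_nonneg (hL'0 _)
      (pow_nonneg ht.1 _)) (Nat.cast_nonneg _)) (fun n => ?_) h1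
    have hre : |L (n+1) * R^n / (Nat.factorial n : ℝ)|
        = |L (n+1)| * R^n / (Nat.factorial n : ℝ) := by
      rw [abs_div, abs_mul, abs_pow, abs_of_nonneg hR0, Nat.abs_cast]
    rw [hre]
    have hnum : L' (n+1) * t^n ≤ |L (n+1)| * R^n :=
      mul_le_mul (max_le (le_abs_self _) (abs_nonneg _))
        (pow_le_pow_left₀ ht.1 (ht.2.trans hTR.le) _) (pow_nonneg ht.1 _) (abs_nonneg _)
    exact (div_le_div_iff_of_pos_right (by positivity)).2 hnum
  set S : ℝ := ∑' n : ℕ, L' (n+1) * T^n / (Nat.factorial n : ℝ) with hSdef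
  have hS0 : 0 ≤ S := tsum_nonneg fun n => div_nonneg (mul_nonneg (hL'0 _) (pow_nonneg hT0 _)) (Nat.cast_nonneg _)
  set ν : ℝ := 2*S + 1 with hνdef
  have hν : 0 < ν := by rw [hνdef]; linarith
  haveI : Nonempty C(↥(Icc (0:ℝ) T), ℝ) := ⟨ContinuousMap.const _ 0⟩
  -- the weighted extension map
  set yext : C(↥(Icc (0:ℝ) T), ℝ) → ℝ → ℝ :=
    fun u s => Real.exp (ν * s) * u (projIcc 0 T hT0 s) with hyextdef
  have hyext_cont : ∀ u, Continuous (yext u) := by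
    intro u
    exact (Real.continuous_exp.comp (continuous_const.mul continuous_id)).mul
      (u.continuous.comp continuous_projIcc)
  have hyext_dist : ∀ u v : C(↥(Icc (0:ℝ) T), ℝ), ∀ s : ℝ,
      |yext u s - yext v s| ≤ dist u v * Real.exp (ν * s) := by
    intro u v s
    have h : yext u s - yext v s
        = Real.exp (ν * s) * (u (projIcc 0 T hT0 s) - v (projIcc 0 T hT0 s)) := by
      rw [hyextdef]; ring
    rw [h, abs_mul, abs_of_nonneg (Real.exp_pos _).le, mul_comm]
    refine mul_le_mul_of_nonneg_right ?_ (Real.exp_pos _).le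
    rw [← Real.dist_eq]
    exact ContinuousMap.dist_apply_le_dist _
  -- the Picard-type operator
  set Φ : (ℝ → ℝ) → ℝ → ℝ := fun y t => y₀ t + ∑' n : ℕ,
    (1 / (Nat.factorial (n + 1)) : ℝ) * (t^(n+1) * Finteg f n y t) with hΦdef
  have htermbd : ∀ (y : ℝ → ℝ), Continuous y → ∀ t ∈ Icc (0:ℝ) T, ∀ n : ℕ,
      ‖(1 / (Nat.factorial (n + 1)) : ℝ) * (t^(n+1) * Finteg f n y t)‖
        ≤ C' (n+1) * T^(n+1) / (Nat.factorial (n+1) : ℝ) := by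
    intro y hy t ht n
    rw [Real.norm_eq_abs, abs_mul, abs_mul, abs_pow, abs_of_nonneg ht.1]
    have h1 : |(1 / (Nat.factorial (n + 1)) : ℝ)| = 1 / (Nat.factorial (n+1) : ℝ) := by
      rw [abs_of_nonneg]; positivity
    rw [h1]
    calc (1 / (Nat.factorial (n+1) : ℝ)) * (t^(n+1) * |Finteg f n y t|)
        ≤ (1 / (Nat.factorial (n+1) : ℝ)) * (T^(n+1) * C' (n+1)) := by
          refine mul_le_mul_of_nonneg_left ?_ (by positivity)
          exact mul_le_mul (pow_le_pow_left₀ ht.1 ht.2 _)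
            (Finteg_bd hfc hbd' n hy ht) (abs_nonneg _) (by positivity)
      _ = C' (n+1) * T^(n+1) / (Nat.factorial (n+1) : ℝ) := by ring
  have hsumm : ∀ (y : ℝ → ℝ), Continuous y → ∀ t ∈ Icc (0:ℝ) T,
      Summable (fun n : ℕ =>
        (1 / (Nat.factorial (n + 1)) : ℝ) * (t^(n+1) * Finteg f n y t)) :=
    fun y hy t ht => Summable.of_norm_bounded hCsum' (htermbd y hy t ht)
  have hΦcont : ∀ (y : ℝ → ℝ), Continuous y → ContinuousOn (Φ y) (Icc 0 T) := by
    intro y hy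
    apply hy₀.add
    refine continuousOn_tsum (fun n => ?_) hCsum' (fun n t ht => htermbd y hy t ht n)
    exact continuousOn_const.mul
      (((continuous_pow (n+1)).continuousOn).mul (Finteg_contOn hfc hbd' n hy))
  set Ψ : C(↥(Icc (0:ℝ) T), ℝ) → C(↥(Icc (0:ℝ) T), ℝ) := fun u =>
    ⟨(Icc (0:ℝ) T).restrict (fun t => Real.exp (-(ν * t)) * Φ (yext u) t),
      (((Real.continuous_exp.comp ((continuous_const.mul continuous_id).neg)).continuousOn).mul
        (hΦcont (yext u) (hyext_cont u))).restrict⟩ with hΨdef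
  have hΨapp : ∀ u (tt : ↥(Icc (0:ℝ) T)),
      Ψ u tt = Real.exp (-(ν * tt)) * Φ (yext u) tt := fun u tt => rfl
  -- the contraction estimate
  have hdist_le : ∀ u v : C(↥(Icc (0:ℝ) T), ℝ), dist (Ψ u) (Ψ v) ≤ 2⁻¹ * dist u v := by
    intro u v
    have hd0 : (0:ℝ) ≤ dist u v := dist_nonneg
    rw [ContinuousMap.dist_le (by positivity)]
    intro tt
    have ht' : (tt:ℝ) ∈ Icc (0:ℝ) T := tt.2
    set t : ℝ := (tt : ℝ) with htdef
    set d : ℝ := dist u v with hddef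
    set J : ℝ := ∫ v' in Icc (0:ℝ) 1, Real.exp (ν * (t * v')) with hJdef
    have hJ0 : 0 ≤ J := setIntegral_nonneg measurableSet_Icc fun _ _ => (Real.exp_pos _).le
    have hsu := hsumm (yext u) (hyext_cont u) t ht'
    have hsv := hsumm (yext v) (hyext_cont v) t ht'
    rw [hΨapp, hΨapp, Real.dist_eq]
    have hsplit : Real.exp (-(ν * t)) * Φ (yext u) t - Real.exp (-(ν * t)) * Φ (yext v) t
        = Real.exp (-(ν * t)) * (Φ (yext u) t - Φ (yext v) t) := by ring
    rw [hsplit, abs_mul, abs_of_nonneg (Real.exp_pos _).le]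
    have hkey : Φ (yext u) t - Φ (yext v) t
        = ∑' n : ℕ, ((1 / (Nat.factorial (n + 1)) : ℝ) * (t^(n+1) * Finteg f n (yext u) t)
            - (1 / (Nat.factorial (n + 1)) : ℝ) * (t^(n+1) * Finteg f n (yext v) t)) := by
      rw [Summable.tsum_sub hsu hsv, hΦdef]
      ring
    have hsummc : Summable (fun n : ℕ =>
        (L' (n+1) * t^n / (Nat.factorial n : ℝ)) * (d * (t * J))) :=
      (hLt t ht').mul_right _
    have step1 : |Φ (yext u) t - Φ (yext v) t|
        ≤ ∑' n : ℕ, (L' (n+1) * t^n / (Nat.factorial n : ℝ)) * (d * (t * J)) := by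
      rw [hkey, ← Real.norm_eq_abs]
      refine tsum_of_norm_bounded hsummc.hasSum fun n => ?_
      have hlipb := Finteg_lip hfc hL'0 hlip' n (hyext_cont u) (hyext_cont v)
        hd0 (hyext_dist u v) ht'
      have heq1 : ‖(1 / (Nat.factorial (n + 1)) : ℝ) * (t^(n+1) * Finteg f n (yext u) t)
          - (1 / (Nat.factorial (n + 1)) : ℝ) * (t^(n+1) * Finteg f n (yext v) t)‖
          = (1 / (Nat.factorial (n+1) : ℝ))
            * (t^(n+1) * |Finteg f n (yext u) t - Finteg f n (yext v) t|) := by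
        rw [← mul_sub, ← mul_sub, Real.norm_eq_abs, abs_mul, abs_mul, abs_pow,
          abs_of_nonneg ht'.1, abs_of_nonneg (by positivity : (0:ℝ) ≤ 1 / (Nat.factorial (n+1) : ℝ))]
      rw [heq1]
      calc (1 / (Nat.factorial (n+1) : ℝ))
            * (t^(n+1) * |Finteg f n (yext u) t - Finteg f n (yext v) t|)
          ≤ (1 / (Nat.factorial (n+1) : ℝ))
            * (t^(n+1) * (L' (n+1) * ((n+1) * (d * J)))) := by
            refine mul_le_mul_of_nonneg_left
              (mul_le_mul_of_nonneg_left hlipb (pow_nonneg ht'.1 _)) (by positivity)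
        _ = (L' (n+1) * t^n / (Nat.factorial n : ℝ)) * (d * (t * J)) := by
            have hfact : ((Nat.factorial (n+1) : ℝ)) = ((n:ℝ)+1) * (Nat.factorial n : ℝ) := by
              exact_mod_cast Nat.factorial_succ n
            have hn0 : (Nat.factorial n : ℝ) ≠ 0 := by positivity
            have hn1 : ((n:ℝ)+1) ≠ 0 := by positivity
            rw [hfact, pow_succ]
            push_cast
            field_simp
    have step2 : ∑' n : ℕ, (L' (n+1) * t^n / (Nat.factorial n : ℝ)) * (d * (t * J))
        ≤ S * (d * (t * J)) := by
      have htJ0 : 0 ≤ d * (t * J) := by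
        refine mul_nonneg hd0 (mul_nonneg ht'.1 hJ0)
      rw [tsum_mul_right, hSdef]
      refine mul_le_mul_of_nonneg_right ?_ htJ0
      refine Summable.tsum_le_tsum (fun n => ?_) (hLt t ht') (hLt T hTmem)
      have : L' (n+1) * t^n ≤ L' (n+1) * T^n :=
        mul_le_mul_of_nonneg_left (pow_le_pow_left₀ ht'.1 ht'.2 _) (hL'0 _)
      exact (div_le_div_iff_of_pos_right (by positivity)).2 this
    have htJ : t * J = (Real.exp (ν * t) - 1) / ν := t_mul_J hν ht'.1
    have hfinal : Real.exp (-(ν * t)) * (S * (d * (t * J))) ≤ 2⁻¹ * d := by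
      rw [htJ]
      have hexp1 : Real.exp (-(ν * t)) * Real.exp (ν * t) = 1 := by
        rw [← Real.exp_add]; simp
      have hexp2 : (0:ℝ) < Real.exp (-(ν * t)) := Real.exp_pos _
      have hexp3 : (1:ℝ) ≤ Real.exp (ν * t) :=
        Real.one_le_exp (mul_nonneg hν.le ht'.1)
      have hEF : Real.exp (-(ν * t)) * (Real.exp (ν * t) - 1) ≤ 1 := by nlinarith
      have hEF0 : 0 ≤ Real.exp (-(ν * t)) * (Real.exp (ν * t) - 1) := by nlinarith
      calc Real.exp (-(ν * t)) * (S * (d * ((Real.exp (ν * t) - 1) / ν)))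
          = (S * d / ν) * (Real.exp (-(ν * t)) * (Real.exp (ν * t) - 1)) := by ring
        _ ≤ (S * d / ν) * 1 := by
            refine mul_le_mul_of_nonneg_left hEF (by positivity)
        _ ≤ 2⁻¹ * d := by
            rw [mul_one, hνdef, div_le_iff₀ (by linarith)]
            nlinarith
    calc Real.exp (-(ν * t)) * |Φ (yext u) t - Φ (yext v) t|
        ≤ Real.exp (-(ν * t)) * (S * (d * (t * J))) := by
          refine mul_le_mul_of_nonneg_left (step1.trans step2) (Real.exp_pos _).le
      _ ≤ 2⁻¹ * d := hfinal
  have hcontr : ContractingWith 2⁻¹ Ψ := by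
    constructor
    · rw [← NNReal.coe_lt_coe]
      norm_num
    · refine LipschitzWith.of_dist_le_mul fun u v => ?_
      have := hdist_le u v
      simpa using this
  set ustar := ContractingWith.fixedPoint Ψ hcontr with hustardef
  have hfix : Function.IsFixedPt Ψ ustar := hcontr.fixedPoint_isFixedPt
  -- converting back to the original multiple integrals
  have hterm : ∀ (y : ℝ → ℝ) (n : ℕ) (t : ℝ), 0 ≤ t →
      t^(n+1) * Finteg f n y t
        = ∫ s in cube (n+1) t, f (n+1) t s fun i => y (s i) := by
    intro y n t ht0
    rw [integral_cube_scale' n (fun s => f (n+1) t s fun i => y (s i)) ht0]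
    rfl
  -- uniqueness core: every solution agrees with `yext ustar` on `[0,T]`
  have main : ∀ y : ℝ → ℝ, IsVolterraSeriesSolution T f y₀ y →
      ∀ t ∈ Icc (0:ℝ) T, y t = yext ustar t := by
    intro y hy t ht
    obtain ⟨hyc, heq⟩ := hy
    set uy : C(↥(Icc (0:ℝ) T), ℝ) :=
      ⟨(Icc (0:ℝ) T).restrict (fun t => Real.exp (-(ν * t)) * y t),
        (((Real.continuous_exp.comp ((continuous_const.mul continuous_id).neg)).continuousOn).mul
          hyc).restrict⟩ with huydef
    have huyext : ∀ s ∈ Icc (0:ℝ) T, yext uy s = y s := by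
      intro s hs
      show Real.exp (ν * s) * uy (projIcc 0 T hT0 s) = y s
      rw [projIcc_of_mem hT0 hs]
      show Real.exp (ν * s) * (Real.exp (-(ν * s)) * y s) = y s
      rw [← mul_assoc, ← Real.exp_add]
      simp
    have hfixy : Function.IsFixedPt Ψ uy := by
      refine ContinuousMap.ext fun tt => ?_
      have ht' : (tt:ℝ) ∈ Icc (0:ℝ) T := tt.2
      rw [hΨapp]
      show Real.exp (-(ν * tt)) * Φ (yext uy) tt = Real.exp (-(ν * tt)) * y tt
      congr 1
      have e1 : ∀ n : ℕ, Finteg f n (yext uy) (tt:ℝ) = Finteg f n y (tt:ℝ) := by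
        intro n
        refine setIntegral_congr_fun (measurableSet_cube _ _) fun w hw => ?_
        congr 1
        funext i
        exact huyext ((tt:ℝ) * w i) (coord_mem ht' hw i)
      calc Φ (yext uy) (tt:ℝ)
          = y₀ (tt:ℝ) + ∑' n : ℕ, (1 / (Nat.factorial (n + 1)) : ℝ) *
              ∫ s in Set.univ.pi fun _ : Fin (n + 1) => Icc (0 : ℝ) (tt:ℝ),
                f (n + 1) (tt:ℝ) s fun i => y (s i) := by
            simp only [hΦdef]
            congr 1
            refine tsum_congr fun n => ?_
            rw [e1 n, hterm y n (tt:ℝ) ht'.1]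
            rfl
        _ = y (tt:ℝ) := (heq (tt:ℝ) ht').symm
    have huy : uy = ustar := hcontr.fixedPoint_unique hfixy
    rw [← huy]
    exact (huyext t ht).symm
  constructor
  · -- existence
    refine ⟨yext ustar, (hyext_cont ustar).continuousOn, fun t ht => ?_⟩
    have h1 := DFunLike.congr_fun hfix (⟨t, ht⟩ : ↥(Icc (0:ℝ) T))
    rw [hΨapp] at h1
    have h2 : yext ustar t = Real.exp (ν * t) * ustar ⟨t, ht⟩ := by
      show Real.exp (ν * t) * ustar (projIcc 0 T hT0 t) = _
      rw [projIcc_of_mem hT0 ht]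
    rw [h2, ← h1]
    show Real.exp (ν * t) * (Real.exp (-(ν * t)) * Φ (yext ustar) t) = _
    rw [← mul_assoc, ← Real.exp_add, add_neg_cancel, Real.exp_zero, one_mul]
    simp only [hΦdef]
    congr 1
    refine tsum_congr fun n => ?_
    rw [hterm (yext ustar) n t ht.1]
    rfl
  · -- uniqueness
    intro y₁ y₂ h₁ h₂ t ht
    rw [main y₁ h₁ t ht, main y₂ h₂ t ht]
end

section
/- Under the hypotheses of the multiple-integral Volterra equation (fₙ continuous, Lipschitz with constants Lₙ, Σₘ L_{m+1}Tᵐ/m! < ∞), the operator S defined by (Sx)(t) = y₀(t) + Σₙ (1/n!)∫₀ᵗ⋯∫₀ᵗ fₙ(t, s₁,…,sₙ, x(s₁),…,x(sₙ)) ds₁⋯dsₙ satisfies ‖Sx − Sξ‖_μ ≤ ((1 − e^{−μT})/μ) · (Σₘ L_{m+1} Tᵐ/m!) · ‖x − ξ‖_μ for all continuous x, ξ on [0,T] and all μ > 0, where ‖x‖_μ = max_{0≤t≤T} e^{−μt}|x(t)|. -/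
open MeasureTheory Set

lemma integral_univ_pi_prod {ι : Type*} [Fintype ι] (S : Set ℝ) (hS : MeasurableSet S)
    (g : ι → ℝ → ℝ) :
    (∫ s in Set.univ.pi fun _ : ι => S, ∏ j, g j (s j)) = ∏ j, ∫ u in S, g j u := by
  rw [← MeasureTheory.integral_indicator (MeasurableSet.univ_pi fun _ => hS)]
  have h : (Set.univ.pi fun _ : ι => S).indicator (fun s : ι → ℝ => ∏ j, g j (s j))
      = fun s : ι → ℝ => ∏ j, S.indicator (g j) (s j) := by
    funext s
    by_cases h : s ∈ Set.univ.pi fun _ : ι => S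
    · rw [Set.indicator_of_mem h]
      exact Finset.prod_congr rfl fun j _ =>
        (Set.indicator_of_mem (h j (Set.mem_univ j)) _).symm
    · rw [Set.indicator_of_notMem h]
      rw [Set.mem_pi] at h; push_neg at h
      obtain ⟨j, _, hj⟩ := h
      exact (Finset.prod_eq_zero (Finset.mem_univ j) (Set.indicator_of_notMem hj _)).symm
  rw [h, MeasureTheory.volume_pi, MeasureTheory.integral_fintype_prod_eq_prod (ι := ι) (fun j => S.indicator (g j))]
  exact Finset.prod_congr rfl fun j _ => MeasureTheory.integral_indicator hS

lemma integral_exp_Icc (μ t : ℝ) (hμ : 0 < μ) (ht : 0 ≤ t) :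
    ∫ u in Icc (0:ℝ) t, Real.exp (μ * u) = (Real.exp (μ * t) - 1) / μ := by
  rw [MeasureTheory.integral_Icc_eq_integral_Ioc, ← intervalIntegral.integral_of_le ht,
    intervalIntegral.integral_comp_mul_left (fun u => Real.exp u) hμ.ne']
  simp [integral_exp, div_eq_inv_mul]

lemma integral_box_exp {n : ℕ} (i : Fin (n+1)) (μ t : ℝ) (hμ : 0 < μ) (ht : 0 ≤ t) :
    (∫ s in Set.univ.pi fun _ : Fin (n+1) => Icc (0:ℝ) t, Real.exp (μ * s i))
      = t ^ n * ((Real.exp (μ * t) - 1) / μ) := by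
  have h := integral_univ_pi_prod (ι := Fin (n+1)) (Icc (0:ℝ) t) measurableSet_Icc
      (fun j u => if j = i then Real.exp (μ * u) else 1)
  have h1 : ∀ s : Fin (n+1) → ℝ,
      (∏ j, (fun j u => if j = i then Real.exp (μ * u) else 1) j (s j))
        = Real.exp (μ * s i) := by
    intro s
    rw [Finset.prod_eq_single i (fun j _ hj => if_neg hj) (by simp)]
    simp
  simp only [h1] at h
  rw [h, ← Finset.prod_erase_mul _ _ (Finset.mem_univ i)]
  have h2 : ∀ j ∈ Finset.univ.erase i,
      (∫ u in Icc (0:ℝ) t, if j = i then Real.exp (μ * u) else 1) = t := by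
    intro j hj
    rw [Finset.mem_erase] at hj
    simp [hj.1, Real.volume_Icc, ht]
  rw [Finset.prod_congr rfl h2, Finset.prod_const, Finset.card_erase_of_mem (Finset.mem_univ i)]
  simp [integral_exp_Icc μ t hμ ht]


/-- The Volterra series operator
`(Sx)(t) = y₀(t) + Σₙ (1/n!) ∫₀ᵗ⋯∫₀ᵗ fₙ(t,s₁,…,sₙ,x(s₁),…,x(sₙ)) ds`. -/
noncomputable def volterraSeriesOp
    (f : (n : ℕ) → ℝ → (Fin n → ℝ) → (Fin n → ℝ) → ℝ)
    (y₀ x : ℝ → ℝ) (t : ℝ) : ℝ :=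
  y₀ t + ∑' n : ℕ, (1 / (Nat.factorial (n + 1)) : ℝ) *
    ∫ s in Set.univ.pi fun _ : Fin (n + 1) => Icc (0 : ℝ) t,
      f (n + 1) t s fun i => x (s i)

/-- Contraction estimate in the weighted norm
`‖x‖_μ = sup_{0≤t≤T} e^{−μt} |x(t)|`:
`‖Sx − Sξ‖_μ ≤ ((1 − e^{−μT})/μ) (Σₘ L_{m+1} Tᵐ/m!) ‖x − ξ‖_μ`. -/
theorem volterra_series_operator_contraction (T : ℝ) (hT : 0 < T)
    (f : (n : ℕ) → ℝ → (Fin n → ℝ) → (Fin n → ℝ) → ℝ)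
    (y₀ : ℝ → ℝ) (hy₀ : ContinuousOn y₀ (Icc 0 T))
    (L : ℕ → ℝ)
    (hfc : ∀ n : ℕ, ContinuousOn
      (fun p : ℝ × (Fin (n + 1) → ℝ) × (Fin (n + 1) → ℝ) =>
        f (n + 1) p.1 p.2.1 p.2.2)
      ((Icc 0 T) ×ˢ ((Set.univ.pi fun _ => Icc (0 : ℝ) T) ×ˢ Set.univ)))
    (hlip : ∀ (n : ℕ) (t : ℝ) (s x ξ : Fin (n + 1) → ℝ), t ∈ Icc 0 T →
      (∀ i, s i ∈ Icc 0 T) →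
      |f (n + 1) t s x - f (n + 1) t s ξ| ≤ L (n + 1) * ∑ i, |x i - ξ i|)
    (hsum : Summable (fun m : ℕ => L (m + 1) * T ^ m / Nat.factorial m))
    (x ξ : ℝ → ℝ) (hx : ContinuousOn x (Icc 0 T)) (hξ : ContinuousOn ξ (Icc 0 T))
    (μ : ℝ) (hμ : 0 < μ) :
    (⨆ t : Icc (0 : ℝ) T, Real.exp (-μ * t) *
        |volterraSeriesOp f y₀ x t - volterraSeriesOp f y₀ ξ t|) ≤
      ((1 - Real.exp (-μ * T)) / μ) *
        (∑' m : ℕ, L (m + 1) * T ^ m / Nat.factorial m) *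
        (⨆ t : Icc (0 : ℝ) T, Real.exp (-μ * t) * |x t - ξ t|) := by
  have hT0 : (0:ℝ) ∈ Icc (0:ℝ) T := ⟨le_refl 0, hT.le⟩
  haveI : Nonempty (Icc (0:ℝ) T) := ⟨⟨0, hT0⟩⟩
  -- L is nonnegative
  have hL : ∀ n : ℕ, 0 ≤ L (n + 1) := by
    intro n
    have h := hlip n 0 (fun _ => 0) (fun _ => 1) (fun _ => 0) hT0 (fun _ => hT0)
    have h0 := le_trans (abs_nonneg _) h
    simp only [sub_zero, abs_one, Finset.sum_const, Finset.card_univ, Fintype.card_fin,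
      nsmul_eq_mul] at h0
    push_cast at h0
    have hn : (0:ℝ) < (n:ℝ) + 1 := by positivity
    nlinarith
  set Nx : ℝ := ⨆ t : Icc (0:ℝ) T, Real.exp (-μ * t) * |x t - ξ t| with hNxdef
  set K : ℝ := ∑' m : ℕ, L (m + 1) * T ^ m / Nat.factorial m with hKdef
  have hK0 : 0 ≤ K := tsum_nonneg fun m =>
    div_nonneg (mul_nonneg (hL m) (by positivity)) (Nat.cast_nonneg _)
  -- boundedness of the weighted difference
  have hcont : Continuous fun t : Icc (0:ℝ) T => Real.exp (-μ * t) * |x t - ξ t| := by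
    apply Continuous.mul
    · exact (Real.continuous_exp.comp (continuous_const.mul continuous_subtype_val))
    · exact ((hx.restrict.sub hξ.restrict).abs)
  have hbdd : BddAbove (Set.range fun t : Icc (0:ℝ) T =>
      Real.exp (-μ * t) * |x t - ξ t|) := (isCompact_range hcont).bddAbove
  have hNx0 : 0 ≤ Nx := Real.iSup_nonneg fun t => by positivity
  have key : ∀ s : ℝ, s ∈ Icc (0:ℝ) T → |x s - ξ s| ≤ Real.exp (μ * s) * Nx := by
    intro s hs
    have h := le_ciSup hbdd (⟨s, hs⟩ : Icc (0:ℝ) T)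
    have h2 : Real.exp (μ * s) * (Real.exp (-μ * s) * |x s - ξ s|)
        ≤ Real.exp (μ * s) * Nx := mul_le_mul_of_nonneg_left h (Real.exp_pos _).le
    calc |x s - ξ s| = Real.exp (μ * s) * (Real.exp (-μ * s) * |x s - ξ s|) := by
          rw [← mul_assoc, ← Real.exp_add]; ring_nf; simp
      _ ≤ Real.exp (μ * s) * Nx := h2
  -- pointwise estimate
  apply ciSup_le
  rintro ⟨t, ht⟩
  simp only
  set a : ℕ → ℝ := fun n => (1 / (Nat.factorial (n + 1)) : ℝ) *
    ∫ s in Set.univ.pi fun _ : Fin (n + 1) => Icc (0 : ℝ) t,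
      f (n + 1) t s fun i => x (s i) with hadef
  set b : ℕ → ℝ := fun n => (1 / (Nat.factorial (n + 1)) : ℝ) *
    ∫ s in Set.univ.pi fun _ : Fin (n + 1) => Icc (0 : ℝ) t,
      f (n + 1) t s fun i => ξ (s i) with hbdef
  set c : ℕ → ℝ := fun n => (L (n+1) * t ^ n / Nat.factorial n) *
    ((Real.exp (μ * t) - 1) / μ * Nx) with hcdef
  have ht0 : 0 ≤ t := ht.1
  have htT : t ≤ T := ht.2
  have hexpt : (0:ℝ) ≤ (Real.exp (μ * t) - 1) / μ := by
    have h1 : (1:ℝ) ≤ Real.exp (μ * t) := Real.one_le_exp (by positivity)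
    exact div_nonneg (by linarith) hμ.le
  have hNxe : 0 ≤ (Real.exp (μ * t) - 1) / μ * Nx := mul_nonneg hexpt hNx0
  have hLt : ∀ n : ℕ, 0 ≤ L (n+1) * t ^ n / Nat.factorial n := fun n =>
    div_nonneg (mul_nonneg (hL n) (pow_nonneg ht0 n)) (Nat.cast_nonneg _)
  have hLle : ∀ n : ℕ, L (n+1) * t ^ n / Nat.factorial n
      ≤ L (n+1) * T ^ n / Nat.factorial n := fun n =>
    div_le_div_of_nonneg_right (mul_le_mul_of_nonneg_left
      (pow_le_pow_left₀ ht0 htT n) (hL n)) (by positivity)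
  have hc0 : ∀ n, 0 ≤ c n := fun n => mul_nonneg (hLt n) hNxe
  -- summability of c
  have hLsum : Summable (fun n : ℕ => L (n+1) * t ^ n / Nat.factorial n) :=
    Summable.of_nonneg_of_le hLt hLle hsum
  have hcsum : Summable c := hLsum.mul_right _
  -- the main per-term bound
  have hab : ∀ n : ℕ, |a n - b n| ≤ c n := by
    intro n
    set box := Set.univ.pi fun _ : Fin (n+1) => Icc (0:ℝ) t with hboxdef
    have hboxm : MeasurableSet box := MeasurableSet.univ_pi fun _ => measurableSet_Icc
    have hboxc : IsCompact box := isCompact_univ_pi fun _ => isCompact_Icc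
    have hmem : ∀ s : Fin (n+1) → ℝ, s ∈ box → ∀ i, s i ∈ Icc (0:ℝ) T := by
      intro s hs i
      exact Icc_subset_Icc le_rfl htT (hs i (Set.mem_univ i))
    have hcontF : ∀ z : ℝ → ℝ, ContinuousOn z (Icc 0 T) →
        ContinuousOn (fun s : Fin (n+1) → ℝ => f (n+1) t s fun i => z (s i)) box := by
      intro z hz
      have hmap : ContinuousOn (fun s : Fin (n+1) → ℝ =>
          ((t, s, fun i => z (s i)) : ℝ × (Fin (n+1) → ℝ) × (Fin (n+1) → ℝ))) box := by
        apply ContinuousOn.prodMk continuousOn_const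
        apply ContinuousOn.prodMk continuousOn_id
        rw [continuousOn_pi]
        intro i
        exact hz.comp (continuous_apply i).continuousOn (fun s hs => hmem s hs i)
      have hmaps : MapsTo (fun s : Fin (n+1) → ℝ =>
          ((t, s, fun i => z (s i)) : ℝ × (Fin (n+1) → ℝ) × (Fin (n+1) → ℝ))) box
          ((Icc 0 T) ×ˢ ((Set.univ.pi fun _ => Icc (0:ℝ) T) ×ˢ Set.univ)) := fun s hs =>
        ⟨ht, ⟨fun i _ => hmem s hs i, Set.mem_univ _⟩⟩
      exact (hfc n).comp hmap hmaps
    have hintF : IntegrableOn (fun s : Fin (n+1) → ℝ => f (n+1) t s fun i => x (s i)) box :=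
      (hcontF x hx).integrableOn_compact hboxc
    have hintG : IntegrableOn (fun s : Fin (n+1) → ℝ => f (n+1) t s fun i => ξ (s i)) box :=
      (hcontF ξ hξ).integrableOn_compact hboxc
    set B : (Fin (n+1) → ℝ) → ℝ :=
      fun s => L (n+1) * ∑ i, Real.exp (μ * s i) * Nx with hBdef
    have hBcont : Continuous B := by
      apply continuous_const.mul
      exact continuous_finset_sum _ fun i _ =>
        (Real.continuous_exp.comp (continuous_const.mul (continuous_apply i))).mul
          continuous_const
    have hintB : IntegrableOn B box := hBcont.continuousOn.integrableOn_compact hboxc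
    have hbound : ∀ s ∈ box,
        |f (n+1) t s (fun i => x (s i)) - f (n+1) t s (fun i => ξ (s i))| ≤ B s := by
      intro s hs
      refine le_trans (hlip n t s _ _ ht (hmem s hs)) ?_
      exact mul_le_mul_of_nonneg_left
        (Finset.sum_le_sum fun i _ => key (s i) (hmem s hs i)) (hL n)
    have hIB : ∫ s in box, B s
        = L (n+1) * ((n+1) * (t ^ n * ((Real.exp (μ * t) - 1) / μ) * Nx)) := by
      rw [integral_const_mul]
      congr 1
      have hIe : ∀ i : Fin (n+1),
          IntegrableOn (fun s : Fin (n+1) → ℝ => Real.exp (μ * s i) * Nx) box :=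
        fun i => (((Real.continuous_exp.comp (continuous_const.mul
          (continuous_apply i))).mul continuous_const).continuousOn).integrableOn_compact hboxc
      rw [MeasureTheory.integral_finset_sum _ fun i _ => hIe i]
      have : ∀ i : Fin (n+1), (∫ s in box, Real.exp (μ * s i) * Nx)
          = t ^ n * ((Real.exp (μ * t) - 1) / μ) * Nx := by
        intro i
        rw [MeasureTheory.integral_mul_const, integral_box_exp i μ t hμ ht0]
      rw [Finset.sum_congr rfl fun i _ => this i, Finset.sum_const, Finset.card_univ,
        Fintype.card_fin, nsmul_eq_mul]
      push_cast
      ring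
    have hstep : |(∫ s in box, f (n+1) t s fun i => x (s i))
        - ∫ s in box, f (n+1) t s fun i => ξ (s i)| ≤ ∫ s in box, B s := by
      rw [← MeasureTheory.integral_sub hintF hintG]
      have ham : ∀ᵐ s ∂(volume.restrict box),
          ‖(f (n+1) t s fun i => x (s i)) - f (n+1) t s fun i => ξ (s i)‖ ≤ B s := by
        filter_upwards [MeasureTheory.ae_restrict_mem hboxm] with s hs
        simpa [Real.norm_eq_abs] using hbound s hs
      simpa [Real.norm_eq_abs] using
        MeasureTheory.norm_integral_le_of_norm_le hintB ham
    have hfac : (0:ℝ) < (Nat.factorial (n+1) : ℝ) := by positivity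
    calc |a n - b n| = (1 / (Nat.factorial (n+1) : ℝ)) *
          |(∫ s in box, f (n+1) t s fun i => x (s i))
            - (∫ s in box, f (n+1) t s fun i => ξ (s i))| := by
          rw [hadef, hbdef]
          rw [← mul_sub, abs_mul, abs_of_nonneg (by positivity : (0:ℝ) ≤ 1 / (Nat.factorial (n+1) : ℝ))]
      _ ≤ (1 / (Nat.factorial (n+1) : ℝ)) * ∫ s in box, B s := by
          exact mul_le_mul_of_nonneg_left hstep (by positivity)
      _ = c n := by
          rw [hIB, hcdef]
          have hfs : (Nat.factorial (n+1) : ℝ) = (n+1) * Nat.factorial n := by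
            rw [Nat.factorial_succ]; push_cast; ring
          have hfn : (0:ℝ) < (Nat.factorial n : ℝ) := by positivity
          rw [hfs]
          field_simp
  have habs_sum : Summable fun n => |a n - b n| :=
    Summable.of_nonneg_of_le (fun n => abs_nonneg _) hab hcsum
  have hdiff_sum : Summable fun n => a n - b n := habs_sum.of_abs
  have htsumc : ∑' n, c n = (∑' n, L (n+1) * t ^ n / Nat.factorial n) *
      ((Real.exp (μ * t) - 1) / μ * Nx) := tsum_mul_right
  have hΔ : |volterraSeriesOp f y₀ x t - volterraSeriesOp f y₀ ξ t| ≤ ∑' n, c n := by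
    have hS : volterraSeriesOp f y₀ x t - volterraSeriesOp f y₀ ξ t
        = ∑' n, a n - ∑' n, b n := by
      simp only [volterraSeriesOp, hadef, hbdef]; ring
    by_cases hA : Summable a
    · have hB : Summable b := by
        have : b = fun n => a n - (a n - b n) := by funext n; ring
        rw [this]; exact hA.sub hdiff_sum
      rw [hS, ← hA.tsum_sub hB]
      calc |∑' n, (a n - b n)| ≤ ∑' n, |a n - b n| := by
            have h := norm_tsum_le_tsum_norm (f := fun n => a n - b n)
              (by simpa only [Real.norm_eq_abs] using habs_sum)
            simpa only [Real.norm_eq_abs] using h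
        _ ≤ ∑' n, c n := Summable.tsum_le_tsum hab habs_sum hcsum
    · have hB : ¬ Summable b := by
        intro hB
        have heq : a = fun n => b n + (a n - b n) := by funext n; ring
        exact hA (heq ▸ hB.add hdiff_sum)
      rw [hS, tsum_eq_zero_of_not_summable hA, tsum_eq_zero_of_not_summable hB]
      simpa using tsum_nonneg hc0
  -- finish
  have hPt : (∑' n, L (n+1) * t ^ n / Nat.factorial n) ≤ K :=
    Summable.tsum_le_tsum hLle hLsum hsum
  have hPt0 : 0 ≤ (∑' n, L (n+1) * t ^ n / Nat.factorial n) := tsum_nonneg hLt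
  calc Real.exp (-μ * t) * |volterraSeriesOp f y₀ x t - volterraSeriesOp f y₀ ξ t|
      ≤ Real.exp (-μ * t) * ∑' n, c n :=
        mul_le_mul_of_nonneg_left hΔ (Real.exp_pos _).le
    _ = ((1 - Real.exp (-μ * t)) / μ) *
          (∑' n, L (n+1) * t ^ n / Nat.factorial n) * Nx := by
        rw [htsumc]
        have hEF : Real.exp (-μ * t) * Real.exp (μ * t) = 1 := by
          rw [← Real.exp_add]; ring_nf; exact Real.exp_zero
        rw [neg_mul] at hEF
        field_simp
        linear_combination ((∑' n, L (n+1) * t ^ n / Nat.factorial n) * Nx) * hEF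
    _ ≤ ((1 - Real.exp (-μ * T)) / μ) * K * Nx := by
        have h1 : Real.exp (-μ * t) ≤ 1 := Real.exp_le_one_iff.mpr (by nlinarith)
        have h2 : Real.exp (-μ * T) ≤ Real.exp (-μ * t) :=
          Real.exp_le_exp.mpr (by nlinarith)
        gcongr
        have h3 : Real.exp (-μ * T) ≤ 1 := Real.exp_le_one_iff.mpr (by nlinarith)
        exact div_nonneg (by linarith) hμ.le
end
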